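/- arXiv:1609.06102 — 2 statements merged into one kernel-verified Lean document; each statement's English description precedes it below -/
import Mathlib

section
/- Weighted interpolation inequality (Lemma 3.1, measure-theoretic form). Let (X, μ) be a measure space, let δ > 0 be a real number, and let φ : X → ℝ be a measurable function with φ(x) > 0 for μ-almost every x. Then for every measurable function f : X → ℝ one has, as an inequality in the extended nonnegative reals, ‖f‖_{L²(μ)} ≤ (∫⁻ φ(x)^{-δ} dμ)^{1/(2+δ)} · ‖f‖_{L^∞(μ)}^{2/(2+δ)} · ‖f·φ‖_{L²(μ)}^{δ/(2+δ)}. -/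
open MeasureTheory ENNReal

theorem weighted_interpolation_inequality
    {X : Type*} [MeasurableSpace X] (μ : Measure X)
    (δ : ℝ) (hδ : 0 < δ)
    (φ : X → ℝ) (hφ : Measurable φ) (hφpos : ∀ᵐ x ∂μ, 0 < φ x)
    (f : X → ℝ) (hf : Measurable f) :
    eLpNorm f 2 μ ≤
      (∫⁻ x, ENNReal.ofReal (φ x ^ (-δ)) ∂μ) ^ (1 / (2 + δ)) *
        eLpNorm f ∞ μ ^ (2 / (2 + δ)) *
          eLpNorm (fun x => f x * φ x) 2 μ ^ (δ / (2 + δ)) := by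
  have h2δ : (0:ℝ) < 2 + δ := by linarith
  set F : X → ℝ≥0∞ := fun x => (‖f x‖₊ : ℝ≥0∞) with hFdef
  set Φ : X → ℝ≥0∞ := fun x => ENNReal.ofReal (φ x) with hΦdef
  have hFm : Measurable F := hf.nnnorm.coe_nnreal_ennreal
  have hΦm : Measurable Φ := hφ.ennreal_ofReal
  set a : ℝ := 2 * δ / (2 + δ) with hadef
  have ha0 : 0 ≤ a := by positivity
  set p : ℝ := (2 + δ) / δ with hpdef
  set q : ℝ := (2 + δ) / 2 with hqdef
  have hpq : p.HolderConjugate q := by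
    rw [Real.holderConjugate_iff]
    constructor
    · rw [lt_div_iff₀ hδ]; linarith
    · rw [hpdef, hqdef]
      field_simp
      ring
  set g : X → ℝ≥0∞ := fun x => (F x * Φ x) ^ a with hgdef
  set h : X → ℝ≥0∞ := fun x => F x ^ (4 / (2 + δ)) * Φ x ^ (-a) with hhdef
  set A : ℝ≥0∞ := ∫⁻ x, ENNReal.ofReal (φ x ^ (-δ)) ∂μ with hAdef
  set M : ℝ≥0∞ := eLpNorm f ∞ μ with hMdef
  set B2 : ℝ≥0∞ := ∫⁻ x, (F x * Φ x) ^ (2:ℝ) ∂μ with hB2def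
  -- pointwise a.e. identity F^2 = g * h
  have hae : ∀ᵐ x ∂μ, F x ^ (2:ℝ) = (g * h) x := by
    filter_upwards [hφpos] with x hx
    have hΦ0 : Φ x ≠ 0 := (ENNReal.ofReal_pos.mpr hx).ne'
    have hΦt : Φ x ≠ ∞ := ENNReal.ofReal_ne_top
    have e1 : (F x * Φ x) ^ a = F x ^ a * Φ x ^ a :=
      ENNReal.mul_rpow_of_nonneg _ _ ha0
    have e2 : Φ x ^ a * Φ x ^ (-a) = 1 := by
      rw [← ENNReal.rpow_add _ _ hΦ0 hΦt]
      simp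
    have e3 : F x ^ a * F x ^ (4 / (2 + δ)) = F x ^ (2:ℝ) := by
      rw [← ENNReal.rpow_add_of_nonneg _ _ ha0 (by positivity)]
      congr 1
      rw [hadef]; field_simp; ring
    calc F x ^ (2:ℝ) = F x ^ a * F x ^ (4 / (2 + δ)) * (Φ x ^ a * Φ x ^ (-a)) := by
          rw [e2, e3, mul_one]
      _ = (g * h) x := by
          simp only [Pi.mul_apply, hgdef, hhdef, e1]; ring
  -- Hölder
  have hgm : Measurable g := (hFm.mul hΦm).pow_const a
  have hhm : Measurable h := (hFm.pow_const (4 / (2 + δ))).mul (hΦm.pow_const (-a))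
  have holder := ENNReal.lintegral_mul_le_Lp_mul_Lq μ hpq hgm.aemeasurable hhm.aemeasurable
  have hgp : ∀ x, g x ^ p = (F x * Φ x) ^ (2:ℝ) := by
    intro x
    rw [hgdef, ← ENNReal.rpow_mul]
    congr 1
    rw [hadef, hpdef]; field_simp
  have hhq : ∀ x, h x ^ q = F x ^ (2:ℝ) * Φ x ^ (-δ) := by
    intro x
    rw [hhdef, ENNReal.mul_rpow_of_nonneg _ _ (by positivity : (0:ℝ) ≤ q),
      ← ENNReal.rpow_mul, ← ENNReal.rpow_mul]
    congr 2
    · rw [hqdef]; field_simp; ring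
    · rw [hadef, hqdef]; field_simp
  -- bound on second factor
  have hF_bd : ∀ᵐ x ∂μ, F x ≤ M := by
    rw [hMdef, eLpNorm_exponent_top]
    exact ae_le_eLpNormEssSup
  have hsec : ∫⁻ x, h x ^ q ∂μ ≤ M ^ (2:ℝ) * A := by
    have step1 : ∫⁻ x, h x ^ q ∂μ ≤ ∫⁻ x, M ^ (2:ℝ) * Φ x ^ (-δ) ∂μ := by
      refine lintegral_mono_ae ?_
      filter_upwards [hF_bd] with x hx
      rw [hhq]
      exact mul_le_mul_left (ENNReal.rpow_le_rpow hx (by norm_num)) _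
    have step2 : ∫⁻ x, M ^ (2:ℝ) * Φ x ^ (-δ) ∂μ = M ^ (2:ℝ) * A := by
      rw [lintegral_const_mul _ (hΦm.pow_const _)]
      congr 1
      rw [hAdef]
      refine lintegral_congr_ae ?_
      filter_upwards [hφpos] with x hx
      rw [← ENNReal.ofReal_rpow_of_pos hx]
    exact step1.trans_eq step2
  have key : ∫⁻ x, F x ^ (2:ℝ) ∂μ ≤ B2 ^ (1/p) * (M ^ (2:ℝ) * A) ^ (1/q) := by
    calc ∫⁻ x, F x ^ (2:ℝ) ∂μ = ∫⁻ x, (g * h) x ∂μ := lintegral_congr_ae hae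
      _ ≤ (∫⁻ x, g x ^ p ∂μ) ^ (1/p) * (∫⁻ x, h x ^ q ∂μ) ^ (1/q) := holder
      _ ≤ B2 ^ (1/p) * (M ^ (2:ℝ) * A) ^ (1/q) := by
          have e1 : (∫⁻ x, g x ^ p ∂μ) = B2 := by
            rw [hB2def]; exact lintegral_congr fun x => hgp x
          have e2 : (∫⁻ x, h x ^ q ∂μ) ^ (1/q) ≤ (M ^ (2:ℝ) * A) ^ (1/q) :=
            ENNReal.rpow_le_rpow hsec (one_div_nonneg.mpr (by rw [hqdef]; positivity))
          rw [e1]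
          exact mul_le_mul_right e2 _
  -- identify B2 with eLpNorm (f*φ) 2
  set B : ℝ≥0∞ := eLpNorm (fun x => f x * φ x) 2 μ with hBdef
  have hB2 : B2 = ∫⁻ x, (‖f x * φ x‖₊ : ℝ≥0∞) ^ (2:ℝ) ∂μ := by
    refine lintegral_congr_ae ?_
    filter_upwards [hφpos] with x hx
    congr 1
    rw [hFdef, hΦdef]
    simp only [nnnorm_mul, ENNReal.coe_mul]
    congr 1
    rw [← Real.enorm_eq_ofReal hx.le]; rfl
  have hBeq : B = B2 ^ ((1:ℝ)/2) := by
    rw [hBdef, eLpNorm_eq_lintegral_rpow_enorm_toReal (by norm_num) (by norm_num), hB2]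
    norm_num
    rfl
  have hL : eLpNorm f 2 μ = (∫⁻ x, F x ^ (2:ℝ) ∂μ) ^ ((1:ℝ)/2) := by
    rw [eLpNorm_eq_lintegral_rpow_enorm_toReal (by norm_num) (by norm_num)]
    norm_num
    rfl
  rw [hL]
  calc (∫⁻ x, F x ^ (2:ℝ) ∂μ) ^ ((1:ℝ)/2)
      ≤ (B2 ^ (1/p) * (M ^ (2:ℝ) * A) ^ (1/q)) ^ ((1:ℝ)/2) :=
        ENNReal.rpow_le_rpow key (by norm_num)
    _ = A ^ (1 / (2 + δ)) * M ^ (2 / (2 + δ)) * B ^ (δ / (2 + δ)) := by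
        rw [hBeq, ENNReal.mul_rpow_of_nonneg _ _ (by norm_num : (0:ℝ) ≤ 1/2),
          ENNReal.mul_rpow_of_nonneg _ _ (one_div_nonneg.mpr (by rw [hqdef]; positivity) : (0:ℝ) ≤ 1/q),
          ENNReal.mul_rpow_of_nonneg _ _ (by norm_num : (0:ℝ) ≤ 1/2),
          ← ENNReal.rpow_mul, ← ENNReal.rpow_mul, ← ENNReal.rpow_mul,
          ← ENNReal.rpow_mul, ← ENNReal.rpow_mul]
        rw [show (1:ℝ)/p * (1/2) = 1/2 * (δ/(2+δ)) by rw [hpdef, one_div_div]; ring,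
          show (2:ℝ) * (1/q * (1/2)) = 2/(2+δ) by rw [hqdef, one_div_div]; ring,
          show (1:ℝ)/q * (1/2) = 1/(2+δ) by rw [hqdef, one_div_div]; ring,
          ENNReal.rpow_mul]
        ring
end

section
/- Pointwise differential inequality satisfied by the squared modulus of a solution of a second-order elliptic equation with complex zero-order coefficient (the key computation in the first step of the proof of Proposition 3.1). Let Ω ⊆ ℝⁿ be an open set, let a : Ω → (n×n real symmetric matrices) have continuously differentiable entries with a(x) positive semidefinite for every x ∈ Ω, let b : Ω → ℝⁿ and d : Ω → ℂ be continuous, and let v, w : Ω → ℝ be twice continuously differentiable. Write u = v + i w and suppose that for every x ∈ Ω the equation ∑_j ∂_j(∑_i a_{ij} ∂_i u)(x) + b(x)·∇u(x) + d(x) u(x) = 0 holds (equivalently, its real and imaginary parts hold: ∑_j ∂_j(∑_i a_{ij} ∂_i v) + b·∇v + Re(d)v − Im(d)w = 0 and ∑_j ∂_j(∑_i a_{ij} ∂_i w) + b·∇w + Re(d)w + Im(d)v = 0 on Ω). Then for every x ∈ Ω, ∑_j ∂_j(∑_i a_{ij} ∂_i |u|²)(x) + b(x)·∇|u|²(x)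 + 2|d(x)| |u(x)|² ≥ 2 ∑_{i,j} a_{ij}(x) ∂_i v(x) ∂_j v(x) + 2 ∑_{i,j} a_{ij}(x) ∂_i w(x) ∂_j w(x) ≥ 0. -/
open Complex Set

/-- The `i`-th partial derivative of a function on `EuclideanSpace ℝ (Fin n)`. -/
noncomputable def pd {n : ℕ} (f : EuclideanSpace ℝ (Fin n) → ℝ) (i : Fin n)
    (x : EuclideanSpace ℝ (Fin n)) : ℝ :=
  fderiv ℝ f x (EuclideanSpace.single i 1)

lemma pd_congr {n : ℕ} {f g : EuclideanSpace ℝ (Fin n) → ℝ} {i : Fin n}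
    {x : EuclideanSpace ℝ (Fin n)} (h : f =ᶠ[nhds x] g) : pd f i x = pd g i x := by
  unfold pd; rw [h.fderiv_eq]

lemma pd_add {n : ℕ} {f g : EuclideanSpace ℝ (Fin n) → ℝ} {i : Fin n}
    {x : EuclideanSpace ℝ (Fin n)} (hf : DifferentiableAt ℝ f x)
    (hg : DifferentiableAt ℝ g x) :
    pd (fun y => f y + g y) i x = pd f i x + pd g i x := by
  simp [pd, fderiv_fun_add hf hg]

lemma pd_mul {n : ℕ} {f g : EuclideanSpace ℝ (Fin n) → ℝ} {i : Fin n}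
    {x : EuclideanSpace ℝ (Fin n)} (hf : DifferentiableAt ℝ f x)
    (hg : DifferentiableAt ℝ g x) :
    pd (fun y => f y * g y) i x = f x * pd g i x + g x * pd f i x := by
  simp [pd, fderiv_fun_mul hf hg]

lemma pd_const_mul {n : ℕ} {f : EuclideanSpace ℝ (Fin n) → ℝ} {c : ℝ} {i : Fin n}
    {x : EuclideanSpace ℝ (Fin n)} (hf : DifferentiableAt ℝ f x) :
    pd (fun y => c * f y) i x = c * pd f i x := by
  simp [pd, fderiv_const_mul hf]

lemma pd_sum {n : ℕ} {ι : Type*} {s : Finset ι}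
    {f : ι → EuclideanSpace ℝ (Fin n) → ℝ} {j : Fin n}
    {x : EuclideanSpace ℝ (Fin n)} (hf : ∀ i ∈ s, DifferentiableAt ℝ (f i) x) :
    pd (fun y => ∑ i ∈ s, f i y) j x = ∑ i ∈ s, pd (f i) j x := by
  simp [pd, fderiv_fun_sum hf]

theorem squared_modulus_supersolution
    {n : ℕ} (Ω : Set (EuclideanSpace ℝ (Fin n))) (hΩ : IsOpen Ω)
    (a : EuclideanSpace ℝ (Fin n) → Matrix (Fin n) (Fin n) ℝ)
    (ha_C1 : ∀ i j, ContDiffOn ℝ 1 (fun x => a x i j) Ω)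
    (ha_symm : ∀ x ∈ Ω, ∀ i j, a x i j = a x j i)
    (ha_psd : ∀ x ∈ Ω, ∀ ξ : Fin n → ℝ, 0 ≤ ∑ i, ∑ j, a x i j * ξ i * ξ j)
    (b : EuclideanSpace ℝ (Fin n) → Fin n → ℝ)
    (hb : ∀ i, ContinuousOn (fun x => b x i) Ω)
    (d : EuclideanSpace ℝ (Fin n) → ℂ) (hd : ContinuousOn d Ω)
    (v w : EuclideanSpace ℝ (Fin n) → ℝ)
    (hv : ContDiffOn ℝ 2 v Ω) (hw : ContDiffOn ℝ 2 w Ω)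
    (heq_re : ∀ x ∈ Ω,
      (∑ j, pd (fun y => ∑ i, a y i j * pd v i y) j x) +
        (∑ i, b x i * pd v i x) + (d x).re * v x - (d x).im * w x = 0)
    (heq_im : ∀ x ∈ Ω,
      (∑ j, pd (fun y => ∑ i, a y i j * pd w i y) j x) +
        (∑ i, b x i * pd w i x) + (d x).re * w x + (d x).im * v x = 0) :
    ∀ x ∈ Ω,
      (2 * ∑ i, ∑ j, a x i j * pd v i x * pd v j x) +
          (2 * ∑ i, ∑ j, a x i j * pd w i x * pd w j x) ≤
        (∑ j, pd (fun y => ∑ i, a y i j * pd (fun z => v z ^ 2 + w z ^ 2) i y) j x) +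
          (∑ i, b x i * pd (fun z => v z ^ 2 + w z ^ 2) i x) +
            2 * ‖d x‖ * (v x ^ 2 + w x ^ 2) ∧
      0 ≤ (2 * ∑ i, ∑ j, a x i j * pd v i x * pd v j x) +
            (2 * ∑ i, ∑ j, a x i j * pd w i x * pd w j x) := by
  intro x hx
  have hΩx : Ω ∈ nhds x := hΩ.mem_nhds hx
  -- basic differentiability facts
  have hvd : ∀ y ∈ Ω, DifferentiableAt ℝ v y := fun y hy =>
    (hv.contDiffAt (hΩ.mem_nhds hy)).differentiableAt (by norm_num)
  have hwd : ∀ y ∈ Ω, DifferentiableAt ℝ w y := fun y hy =>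
    (hw.contDiffAt (hΩ.mem_nhds hy)).differentiableAt (by norm_num)
  have hpdv : ∀ (i : Fin n), ∀ y ∈ Ω, DifferentiableAt ℝ (pd v i) y := by
    intro i y hy
    have h2 : ContDiffAt ℝ 2 v y := hv.contDiffAt (hΩ.mem_nhds hy)
    have h1 : ContDiffAt ℝ 1 (fderiv ℝ v) y := h2.fderiv_right (by norm_num)
    exact (h1.differentiableAt one_ne_zero).clm_apply (differentiableAt_const _)
  have hpdw : ∀ (i : Fin n), ∀ y ∈ Ω, DifferentiableAt ℝ (pd w i) y := by
    intro i y hy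
    have h2 : ContDiffAt ℝ 2 w y := hw.contDiffAt (hΩ.mem_nhds hy)
    have h1 : ContDiffAt ℝ 1 (fderiv ℝ w) y := h2.fderiv_right (by norm_num)
    exact (h1.differentiableAt one_ne_zero).clm_apply (differentiableAt_const _)
  have had : ∀ (i j : Fin n), ∀ y ∈ Ω, DifferentiableAt ℝ (fun z => a z i j) y :=
    fun i j y hy => ((ha_C1 i j).contDiffAt (hΩ.mem_nhds hy)).differentiableAt one_ne_zero
  have hGd : ∀ (j : Fin n), ∀ y ∈ Ω,
      DifferentiableAt ℝ (fun z => ∑ i, a z i j * pd v i z) y := fun j y hy =>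
    DifferentiableAt.fun_sum fun i _ => (had i j y hy).mul (hpdv i y hy)
  have hHd : ∀ (j : Fin n), ∀ y ∈ Ω,
      DifferentiableAt ℝ (fun z => ∑ i, a z i j * pd w i z) y := fun j y hy =>
    DifferentiableAt.fun_sum fun i _ => (had i j y hy).mul (hpdw i y hy)
  -- derivative of the squared modulus
  have hsq : ∀ y ∈ Ω, ∀ (i : Fin n),
      pd (fun z => v z ^ 2 + w z ^ 2) i y = 2 * v y * pd v i y + 2 * w y * pd w i y := by
    intro y hy i
    have h1 : (fun z => v z ^ 2 + w z ^ 2) = fun z => v z * v z + w z * w z := by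
      funext z; ring
    rw [h1, pd_add ((hvd y hy).fun_mul (hvd y hy)) ((hwd y hy).fun_mul (hwd y hy)),
      pd_mul (hvd y hy) (hvd y hy), pd_mul (hwd y hy) (hwd y hy)]
    ring
  -- the key second-order computation for each j
  have key : ∀ (j : Fin n),
      pd (fun y => ∑ i, a y i j * pd (fun z => v z ^ 2 + w z ^ 2) i y) j x
        = 2 * (pd v j x * (∑ i, a x i j * pd v i x))
          + 2 * v x * pd (fun y => ∑ i, a y i j * pd v i y) j x
          + 2 * (pd w j x * (∑ i, a x i j * pd w i x))
          + 2 * w x * pd (fun y => ∑ i, a y i j * pd w i y) j x := by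
    intro j
    have hev : (fun y => ∑ i, a y i j * pd (fun z => v z ^ 2 + w z ^ 2) i y)
        =ᶠ[nhds x] (fun y => v y * (2 * ∑ i, a y i j * pd v i y)
                    + w y * (2 * ∑ i, a y i j * pd w i y)) := by
      filter_upwards [hΩx] with y hy
      have : ∀ i : Fin n, a y i j * pd (fun z => v z ^ 2 + w z ^ 2) i y
          = a y i j * (2 * v y * pd v i y) + a y i j * (2 * w y * pd w i y) := by
        intro i; rw [hsq y hy i]; ring
      rw [Finset.sum_congr rfl fun i _ => this i, Finset.sum_add_distrib,
        Finset.mul_sum, Finset.mul_sum, Finset.mul_sum, Finset.mul_sum]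
      congr 1
      · exact Finset.sum_congr rfl fun i _ => by ring
      · exact Finset.sum_congr rfl fun i _ => by ring
    rw [pd_congr hev,
      pd_add ((hvd x hx).fun_mul ((hGd j x hx).const_mul 2))
        ((hwd x hx).fun_mul ((hHd j x hx).const_mul 2)),
      pd_mul (hvd x hx) ((hGd j x hx).const_mul 2),
      pd_mul (hwd x hx) ((hHd j x hx).const_mul 2),
      pd_const_mul (hGd j x hx), pd_const_mul (hHd j x hx)]
    ring
  -- sums reorganization
  have hS1 : ∑ j, pd v j x * (∑ i, a x i j * pd v i x)
      = ∑ i, ∑ j, a x i j * pd v i x * pd v j x := by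
    rw [Finset.sum_comm]
    exact Finset.sum_congr rfl fun j _ => by
      rw [Finset.mul_sum]; exact Finset.sum_congr rfl fun i _ => by ring
  have hS2 : ∑ j, pd w j x * (∑ i, a x i j * pd w i x)
      = ∑ i, ∑ j, a x i j * pd w i x * pd w j x := by
    rw [Finset.sum_comm]
    exact Finset.sum_congr rfl fun j _ => by
      rw [Finset.mul_sum]; exact Finset.sum_congr rfl fun i _ => by ring
  -- the full second-order term
  have hmain : (∑ j, pd (fun y => ∑ i, a y i j * pd (fun z => v z ^ 2 + w z ^ 2) i y) j x)
      = 2 * (∑ i, ∑ j, a x i j * pd v i x * pd v j x)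
        + 2 * v x * (∑ j, pd (fun y => ∑ i, a y i j * pd v i y) j x)
        + 2 * (∑ i, ∑ j, a x i j * pd w i x * pd w j x)
        + 2 * w x * (∑ j, pd (fun y => ∑ i, a y i j * pd w i y) j x) := by
    rw [Finset.sum_congr rfl fun j _ => key j]
    rw [Finset.sum_add_distrib, Finset.sum_add_distrib, Finset.sum_add_distrib,
      ← Finset.mul_sum, ← Finset.mul_sum, ← Finset.mul_sum, ← Finset.mul_sum, hS1, hS2]
  -- the first-order term
  have hbterm : (∑ i, b x i * pd (fun z => v z ^ 2 + w z ^ 2) i x)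
      = 2 * v x * (∑ i, b x i * pd v i x) + 2 * w x * (∑ i, b x i * pd w i x) := by
    rw [Finset.mul_sum, Finset.mul_sum, ← Finset.sum_add_distrib]
    exact Finset.sum_congr rfl fun i _ => by rw [hsq x hx i]; ring
  -- nonnegativity
  have hQv := ha_psd x hx (fun i => pd v i x)
  have hQw := ha_psd x hx (fun i => pd w i x)
  have hre := Complex.re_le_norm (d x)
  have h1 := heq_re x hx
  have h2 := heq_im x hx
  have h1' : (∑ j, pd (fun y => ∑ i, a y i j * pd v i y) j x)
      + (∑ i, b x i * pd v i x) = (d x).im * w x - (d x).re * v x := by linarith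
  have h2' : (∑ j, pd (fun y => ∑ i, a y i j * pd w i y) j x)
      + (∑ i, b x i * pd w i x) = -(d x).re * w x - (d x).im * v x := by linarith
  have e1 : 2 * v x * (∑ j, pd (fun y => ∑ i, a y i j * pd v i y) j x)
      + 2 * v x * (∑ i, b x i * pd v i x)
      = 2 * v x * ((d x).im * w x - (d x).re * v x) := by
    rw [← h1']; ring
  have e2 : 2 * w x * (∑ j, pd (fun y => ∑ i, a y i j * pd w i y) j x)
      + 2 * w x * (∑ i, b x i * pd w i x)
      = 2 * w x * (-(d x).re * w x - (d x).im * v x) := by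
    rw [← h2']; ring
  have hprod : 0 ≤ (‖d x‖ - (d x).re) * (v x ^ 2 + w x ^ 2) :=
    mul_nonneg (sub_nonneg.mpr hre) (add_nonneg (sq_nonneg _) (sq_nonneg _))
  constructor
  · rw [hmain, hbterm]
    nlinarith [e1, e2, hprod]
  · linarith
end
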